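/- Let Λ₁, Λ₂ be d×r real matrices of full column rank and set P_I¹ = (1/2)(Λ₁(Λ₁ᵀΛ₁)⁻¹Λ₁ᵀ + I_d). Then the following are equivalent: (a) there exists an invertible r×r matrix Φ with Λ₁ = Λ₂Φ; (b) P_I¹ Λ₂ = Λ₂ and rank(Λ₁ᵀΛ₂) = r. -/
import Mathlib


open Matrix

/-- Orthogonal projection onto the column space of `Λ`. -/
noncomputable def proj {d r : ℕ} (Λ : Matrix (Fin d) (Fin r) ℝ) : Matrix (Fin d) (Fin d) ℝ :=
  Λ * (Λᵀ * Λ)⁻¹ * Λᵀ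

/-- The transformation `P_I = (1/2)(proj Λ + I)`. -/
noncomputable def projI {d r : ℕ} (Λ : Matrix (Fin d) (Fin r) ℝ) : Matrix (Fin d) (Fin d) ℝ :=
  (1 / 2 : ℝ) • (proj Λ + 1)

lemma isUnit_of_rank_eq_card {r : ℕ} (A : Matrix (Fin r) (Fin r) ℝ) (h : A.rank = r) :
    IsUnit A := by
  have htop : LinearMap.range A.mulVecLin = ⊤ := by
    apply Submodule.eq_top_of_finrank_eq
    rw [← Matrix.rank, h]
    simp [Module.finrank_fintype_fun_eq_card]
  have hsurj : Function.Surjective A.mulVecLin := LinearMap.range_eq_top.mp htop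
  have hinj : Function.Injective A.mulVecLin :=
    (LinearMap.injective_iff_surjective).mpr hsurj
  rw [Matrix.isUnit_iff_isUnit_det, isUnit_iff_ne_zero]
  intro hdet
  obtain ⟨v, hv, hAv⟩ := Matrix.exists_mulVec_eq_zero_iff.mpr hdet
  exact hv (hinj (by simpa using hAv))

theorem null_iff_fixed_and_full_rank {d r : ℕ} (Λ₁ Λ₂ : Matrix (Fin d) (Fin r) ℝ)
    (h₁ : Λ₁.rank = r) (h₂ : Λ₂.rank = r) :
    (∃ Φ : Matrix (Fin r) (Fin r) ℝ, IsUnit Φ ∧ Λ₁ = Λ₂ * Φ) ↔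
      (projI Λ₁ * Λ₂ = Λ₂ ∧ (Λ₁ᵀ * Λ₂).rank = r) := by
  have hU₁ : IsUnit (Λ₁ᵀ * Λ₁) :=
    isUnit_of_rank_eq_card _ (by rw [Matrix.rank_transpose_mul_self, h₁])
  have hU₂ : IsUnit (Λ₂ᵀ * Λ₂) :=
    isUnit_of_rank_eq_card _ (by rw [Matrix.rank_transpose_mul_self, h₂])
  constructor
  · rintro ⟨Φ, hΦ, rfl⟩
    have hΦd : IsUnit Φ.det := (Matrix.isUnit_iff_isUnit_det _).mp hΦ
    have hΦt : IsUnit Φᵀ.det := by rwa [Matrix.det_transpose]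
    have hmul : (Λ₂ * Φ)ᵀ * (Λ₂ * Φ) = Φᵀ * (Λ₂ᵀ * Λ₂) * Φ := by
      simp [Matrix.transpose_mul, Matrix.mul_assoc]
    constructor
    · have hproj : proj (Λ₂ * Φ) * Λ₂ = Λ₂ := by
        rw [proj, hmul]
        rw [Matrix.mul_inv_rev, Matrix.mul_inv_rev]
        have e1 : Φ * (Φ⁻¹ * ((Λ₂ᵀ * Λ₂)⁻¹ * Φᵀ⁻¹)) = (Λ₂ᵀ * Λ₂)⁻¹ * Φᵀ⁻¹ := by
          rw [← Matrix.mul_assoc, Matrix.mul_nonsing_inv _ hΦd, Matrix.one_mul]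
        calc Λ₂ * Φ * (Φ⁻¹ * ((Λ₂ᵀ * Λ₂)⁻¹ * Φᵀ⁻¹)) * (Λ₂ * Φ)ᵀ * Λ₂
            = Λ₂ * ((Λ₂ᵀ * Λ₂)⁻¹ * Φᵀ⁻¹) * (Φᵀ * (Λ₂ᵀ * Λ₂)) := by
              rw [Matrix.mul_assoc Λ₂ Φ, e1]
              simp [Matrix.transpose_mul, Matrix.mul_assoc]
          _ = Λ₂ * (Λ₂ᵀ * Λ₂)⁻¹ * (Φᵀ⁻¹ * Φᵀ) * (Λ₂ᵀ * Λ₂) := by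
              simp [Matrix.mul_assoc]
          _ = Λ₂ := by
              rw [Matrix.nonsing_inv_mul _ hΦt, Matrix.mul_one, Matrix.mul_assoc,
                Matrix.nonsing_inv_mul _ ((Matrix.isUnit_iff_isUnit_det _).mp hU₂), Matrix.mul_one]
      rw [projI, Matrix.smul_mul, Matrix.add_mul, hproj, Matrix.one_mul]
      rw [smul_add]
      norm_num
      rw [← add_smul]
      norm_num
    · have : (Λ₂ * Φ)ᵀ * Λ₂ = Φᵀ * (Λ₂ᵀ * Λ₂) := by
        simp [Matrix.transpose_mul, Matrix.mul_assoc]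
      rw [this, Matrix.rank_mul_eq_right_of_isUnit_det _ _ hΦt,
        Matrix.rank_transpose_mul_self, h₂]
  · rintro ⟨hfix, hrank⟩
    have hN : IsUnit (Λ₁ᵀ * Λ₂) := isUnit_of_rank_eq_card _ hrank
    have hproj : proj Λ₁ * Λ₂ = Λ₂ := by
      have h2 : (2 : ℝ) • (projI Λ₁ * Λ₂) = proj Λ₁ * Λ₂ + Λ₂ := by
        rw [projI, Matrix.smul_mul, smul_smul]
        norm_num [Matrix.add_mul]
      rw [hfix] at h2
      have := h2.symm
      rw [two_smul] at this
      exact add_right_cancel this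
    set Ψ : Matrix (Fin r) (Fin r) ℝ := (Λ₁ᵀ * Λ₁)⁻¹ * (Λ₁ᵀ * Λ₂) with hΨ
    have hΨU : IsUnit Ψ := ((Matrix.isUnit_nonsing_inv_iff.mpr hU₁).mul hN)
    have hΛ₂ : Λ₂ = Λ₁ * Ψ := by
      rw [hΨ]
      conv_lhs => rw [← hproj, proj]
      simp [Matrix.mul_assoc]
    refine ⟨Ψ⁻¹, Matrix.isUnit_nonsing_inv_iff.mpr hΨU, ?_⟩
    rw [hΛ₂, Matrix.mul_assoc, Matrix.mul_nonsing_inv _ ((Matrix.isUnit_iff_isUnit_det _).mp hΨU),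
      Matrix.mul_one]
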